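/- arXiv:1507.06472 — 2 statements merged into one kernel-verified Lean document; each statement's English description precedes it below -/
import Mathlib

section
/- Let 0 < γ ≤ 1/2 and let (a_n)_{n≥1} be the block-constructed sequence built from strictly increasing sequences (m_j), (e_j) of positive integers satisfying condition (i): (log m_l)² ≥ E_{l−1} for all l ≥ 2. Let α be a real number such that the discrepancy of ({n α})_{n≥1} satisfies N·D_N ≤ c̄₁(α)·(log N)^{3/2} for all N ≥ 2. Then for all sufficiently large l, the discrepancy of the first F_l terms of ({a_n α})_{n≥1} satisfies F_l · D_{F_l} ≤ 2·(log F_l)². -/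
open Finset MeasureTheory Filter

/-- Discrepancy of the first `N` points `x 1, …, x N` (points in `[0,1)`):
`D_N = sup_{0 ≤ a < b ≤ 1} | #{1 ≤ n ≤ N : x n ∈ [a,b)} / N − (b − a) |`. -/
noncomputable def disc (N : ℕ) (x : ℕ → ℝ) : ℝ :=
  ⨆ p : {p : ℝ × ℝ // 0 ≤ p.1 ∧ p.1 < p.2 ∧ p.2 ≤ 1},
    |(((Finset.Icc 1 N).filter (fun n => x n ∈ Set.Ico p.1.1 p.1.2)).card : ℝ) / N
      - (p.1.2 - p.1.1)|

/-- Index of the last term of the `s`-th linear block: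
`F_s = Σ_{i=1}^s m_i + Σ_{i=1}^{s-1} e_i`. -/
def Fidx (m e : ℕ → ℕ) (s : ℕ) : ℕ :=
  (∑ i ∈ Finset.Icc 1 s, m i) + ∑ i ∈ Finset.Icc 1 (s - 1), e i

/-- Index of the last term of the `s`-th quadratic block:
`E_s = Σ_{i=1}^s m_i + Σ_{i=1}^s e_i`. -/
def Eidx (m e : ℕ → ℕ) (s : ℕ) : ℕ :=
  (∑ i ∈ Finset.Icc 1 s, m i) + ∑ i ∈ Finset.Icc 1 s, e i

/-- The value `A_j = B_{j-1} + m_j` of the block construction. -/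
def Aval (m e : ℕ → ℕ) (j : ℕ) : ℕ :=
  (∑ i ∈ Finset.Icc 1 j, m i) + ∑ i ∈ Finset.Icc 1 (j - 1), (e i) ^ 2

/-- The value `B_j = A_j + e_j ^ 2` of the block construction. -/
def Bval (m e : ℕ → ℕ) (j : ℕ) : ℕ :=
  (∑ i ∈ Finset.Icc 1 j, m i) + ∑ i ∈ Finset.Icc 1 j, (e i) ^ 2

/-- `a` is the block-constructed sequence built from `m` and `e`: for each `l ≥ 1`,
the terms with indices `E_{l-1} < n ≤ F_l` form the `l`-th linear block
`B_{l-1}+1, …, B_{l-1}+m_l = A_l`, and the terms with indices `F_l < n ≤ E_l`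
form the `l`-th quadratic block `A_l+1², …, A_l+e_l² = B_l`. -/
def IsBlockSeq (m e a : ℕ → ℕ) : Prop :=
  ∀ l : ℕ, 1 ≤ l →
    (∀ n : ℕ, Eidx m e (l - 1) < n → n ≤ Fidx m e l →
      a n = Bval m e (l - 1) + (n - Eidx m e (l - 1))) ∧
    (∀ n : ℕ, Fidx m e l < n → n ≤ Eidx m e l →
      a n = Aval m e l + (n - Fidx m e l) ^ 2)

/-! ### Auxiliary lemmas -/

lemma st8_count_split (Q : ℕ → Prop) [DecidablePred Q] (B M : ℕ) :
    ((Finset.Icc 1 (B + M)).filter Q).card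
      = ((Finset.Icc 1 B).filter Q).card + ((Finset.Icc (B + 1) (B + M)).filter Q).card := by
  have hu : Finset.Icc 1 B ∪ Finset.Icc (B + 1) (B + M) = Finset.Icc 1 (B + M) := by
    ext x; simp only [Finset.mem_union, Finset.mem_Icc]; omega
  have hd : Disjoint (Finset.Icc 1 B) (Finset.Icc (B + 1) (B + M)) := by
    rw [Finset.disjoint_left]
    intro x hx hx'
    simp only [Finset.mem_Icc] at hx hx'; omega
  rw [← hu, Finset.filter_union,
    Finset.card_union_of_disjoint (Finset.disjoint_filter_filter hd)]

lemma st8_count_shift (Q : ℕ → Prop) [DecidablePred Q] (B M : ℕ) :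
    ((Finset.Icc (B + 1) (B + M)).filter Q).card
      = ((Finset.Icc 1 M).filter fun k => Q (B + k)).card := by
  refine Finset.card_bij' (fun n _ => n - B) (fun k _ => B + k) ?_ ?_ ?_ ?_
  · intro n hn
    simp only [Finset.mem_filter, Finset.mem_Icc] at hn ⊢
    refine ⟨⟨by omega, by omega⟩, ?_⟩
    rw [show B + (n - B) = n by omega]
    exact hn.2
  · intro k hk
    simp only [Finset.mem_filter, Finset.mem_Icc] at hk ⊢
    exact ⟨⟨by omega, by omega⟩, hk.2⟩
  · intro n hn
    simp only [Finset.mem_filter, Finset.mem_Icc] at hn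
    show B + (n - B) = n
    omega
  · intro k hk
    show (B + k) - B = k
    omega

lemma st8_sum_sq_le (s : Finset ℕ) (f : ℕ → ℕ) :
    (∑ i ∈ s, f i ^ 2) ≤ (∑ i ∈ s, f i) ^ 2 := by
  calc (∑ i ∈ s, f i ^ 2) ≤ ∑ i ∈ s, f i * ∑ j ∈ s, f j := by
        refine Finset.sum_le_sum fun i hi => ?_
        rw [pow_two]
        exact Nat.mul_le_mul_left _ (Finset.single_le_sum (fun _ _ => Nat.zero_le _) hi)
    _ = (∑ i ∈ s, f i) ^ 2 := by rw [← Finset.sum_mul, pow_two]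

lemma st8_abs_le_disc (x : ℕ → ℝ) (N : ℕ) (hN : 1 ≤ N) {p1 p2 : ℝ}
    (h1 : 0 ≤ p1) (h2 : p1 < p2) (h3 : p2 ≤ 1) :
    |(((Finset.Icc 1 N).filter (fun n => x n ∈ Set.Ico p1 p2)).card : ℝ) / N - (p2 - p1)|
      ≤ disc N x := by
  have hN' : (0:ℝ) < N := by exact_mod_cast hN
  have hbdd : BddAbove (Set.range fun p : {p : ℝ × ℝ // 0 ≤ p.1 ∧ p.1 < p.2 ∧ p.2 ≤ 1} =>
      |(((Finset.Icc 1 N).filter (fun n => x n ∈ Set.Ico p.1.1 p.1.2)).card : ℝ) / N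
        - (p.1.2 - p.1.1)|) := by
    refine ⟨2, ?_⟩
    rintro y ⟨q, rfl⟩
    obtain ⟨hq1, hq2, hq3⟩ := q.2
    have hcard : (((Finset.Icc 1 N).filter
        (fun n => x n ∈ Set.Ico q.1.1 q.1.2)).card : ℝ) ≤ N := by
      have h := Finset.card_filter_le (Finset.Icc 1 N) (fun n => x n ∈ Set.Ico q.1.1 q.1.2)
      have hc : (Finset.Icc 1 N).card = N := by rw [Nat.card_Icc]; omega
      exact_mod_cast hc ▸ h
    have h0 : (0:ℝ) ≤ (((Finset.Icc 1 N).filter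
        (fun n => x n ∈ Set.Ico q.1.1 q.1.2)).card : ℝ) := Nat.cast_nonneg _
    have hdiv0 : (0:ℝ) ≤ (((Finset.Icc 1 N).filter
        (fun n => x n ∈ Set.Ico q.1.1 q.1.2)).card : ℝ) / N := div_nonneg h0 hN'.le
    have hdiv1 : (((Finset.Icc 1 N).filter
        (fun n => x n ∈ Set.Ico q.1.1 q.1.2)).card : ℝ) / N ≤ 1 := by
      rw [div_le_one hN']; exact hcard
    rw [abs_le]
    constructor <;> nlinarith
  exact le_ciSup hbdd ⟨(p1, p2), h1, h2, h3⟩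

lemma st8_count_est (α c₁ : ℝ)
    (hα : ∀ N : ℕ, 2 ≤ N →
      (N : ℝ) * disc N (fun n => Int.fract ((n : ℝ) * α)) ≤ c₁ * (Real.log N) ^ (3 / 2 : ℝ))
    (N : ℕ) (hN : 2 ≤ N) {p1 p2 : ℝ} (h1 : 0 ≤ p1) (h2 : p1 < p2) (h3 : p2 ≤ 1) :
    |(((Finset.Icc 1 N).filter
        (fun n : ℕ => Int.fract ((n : ℝ) * α) ∈ Set.Ico p1 p2)).card : ℝ) - N * (p2 - p1)|
      ≤ c₁ * (Real.log N) ^ (3 / 2 : ℝ) := by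
  have hN' : (0:ℝ) < N := by exact_mod_cast Nat.lt_of_lt_of_le (by norm_num) hN
  have h := st8_abs_le_disc (fun n => Int.fract ((n : ℝ) * α)) N (by omega) h1 h2 h3
  have h' := mul_le_mul_of_nonneg_left h hN'.le
  have heq : (((Finset.Icc 1 N).filter
        (fun n : ℕ => Int.fract ((n : ℝ) * α) ∈ Set.Ico p1 p2)).card : ℝ) - N * (p2 - p1)
      = N * ((((Finset.Icc 1 N).filter
        (fun n : ℕ => Int.fract ((n : ℝ) * α) ∈ Set.Ico p1 p2)).card : ℝ) / N - (p2 - p1)) := by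
    rw [mul_sub (N:ℝ) (_ / (N:ℝ)) (p2 - p1), mul_div_assoc', mul_div_cancel_left₀ _ hN'.ne']
  rw [heq, abs_mul, abs_of_pos hN']
  exact h'.trans (hα N hN)

lemma st8_disc_mul_le (x : ℕ → ℝ) (N : ℕ) (hN : 0 < N) (bound : ℝ)
    (h : ∀ p1 p2 : ℝ, 0 ≤ p1 → p1 < p2 → p2 ≤ 1 →
      |(((Finset.Icc 1 N).filter (fun n => x n ∈ Set.Ico p1 p2)).card : ℝ)
        - (N : ℝ) * (p2 - p1)| ≤ bound) :
    (N : ℝ) * disc N x ≤ bound := by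
  have hN' : (0:ℝ) < N := by exact_mod_cast hN
  haveI : Nonempty {p : ℝ × ℝ // 0 ≤ p.1 ∧ p.1 < p.2 ∧ p.2 ≤ 1} :=
    ⟨⟨(0, 1), by norm_num⟩⟩
  have hd : disc N x ≤ bound / N := by
    refine ciSup_le ?_
    rintro ⟨⟨p1, p2⟩, hp1, hp2, hp3⟩
    dsimp only
    have heq : (((Finset.Icc 1 N).filter (fun n => x n ∈ Set.Ico p1 p2)).card : ℝ) / N
        - (p2 - p1)
        = ((((Finset.Icc 1 N).filter (fun n => x n ∈ Set.Ico p1 p2)).card : ℝ)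
          - (N : ℝ) * (p2 - p1)) / N := by
      field_simp
    rw [heq, abs_div, abs_of_pos hN']
    gcongr
    exact h p1 p2 hp1 hp2 hp3
  calc (N : ℝ) * disc N x ≤ (N : ℝ) * (bound / N) :=
        mul_le_mul_of_nonneg_left hd hN'.le
    _ = bound := by field_simp

set_option maxHeartbeats 1000000 in
theorem statement8 (γ : ℝ) (hγ0 : 0 < γ) (hγ : γ ≤ 1 / 2)
    (m e : ℕ → ℕ) (hm : StrictMonoOn m (Set.Ici 1)) (he : StrictMonoOn e (Set.Ici 1))
    (hm1 : ∀ j, 1 ≤ j → 0 < m j) (he1 : ∀ j, 1 ≤ j → 0 < e j)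
    (a : ℕ → ℕ) (ha : IsBlockSeq m e a)
    (hcondi : ∀ l, 2 ≤ l → (Eidx m e (l - 1) : ℝ) ≤ (Real.log (m l)) ^ 2)
    (α : ℝ) (c₁ : ℝ)
    (hα : ∀ N : ℕ, 2 ≤ N →
      (N : ℝ) * disc N (fun n => Int.fract ((n : ℝ) * α)) ≤ c₁ * (Real.log N) ^ (3 / 2 : ℝ)) :
    ∀ᶠ l : ℕ in atTop,
      (Fidx m e l : ℝ) * disc (Fidx m e l) (fun n => Int.fract ((a n : ℝ) * α)) ≤
        2 * (Real.log (Fidx m e l)) ^ 2 := by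
  have hne : Nonempty {p : ℝ × ℝ // 0 ≤ p.1 ∧ p.1 < p.2 ∧ p.2 ≤ 1} :=
    ⟨⟨(0, 1), by norm_num⟩⟩
  -- c₁ is nonnegative
  have hc₁ : 0 ≤ c₁ := by
    have h := hα 2 le_rfl
    have h0 : (0:ℝ) ≤ disc 2 (fun n => Int.fract ((n : ℝ) * α)) :=
      le_trans (abs_nonneg _)
        (st8_abs_le_disc (fun n => Int.fract ((n : ℝ) * α)) 2 (by norm_num)
          (le_refl (0:ℝ)) (by norm_num) (le_refl (1:ℝ)))
    have hl2 : (0:ℝ) < Real.log 2 := Real.log_pos (by norm_num)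
    have hp : (0:ℝ) < (Real.log 2) ^ (3/2 : ℝ) := Real.rpow_pos_of_pos hl2 _
    push_cast at h
    nlinarith
  -- m l ≥ l
  have hml : ∀ l, 1 ≤ l → l ≤ m l := by
    intro l hl
    induction l with
    | zero => omega
    | succ n ih =>
      rcases Nat.lt_or_ge 1 (n + 1) with h | h
      · have hn1 : 1 ≤ n := by omega
        have h1 := hm (Set.mem_Ici.2 hn1) (Set.mem_Ici.2 (by omega : 1 ≤ n + 1))
          (by omega : n < n + 1)
        have h2 := ih hn1
        omega
      · have : n = 0 := by omega
        subst this
        exact hm1 1 le_rfl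
  -- F l ≥ l
  have hF : ∀ l, 1 ≤ l → l ≤ Fidx m e l := by
    intro l hl
    have h1 : m l ≤ ∑ i ∈ Finset.Icc 1 l, m i :=
      Finset.single_le_sum (fun _ _ => Nat.zero_le _) (Finset.mem_Icc.2 ⟨hl, le_rfl⟩)
    have h2 := hml l hl
    unfold Fidx; omega
  set K : ℝ := 1 + (12 * c₁) ^ 2 with hK
  have hlogtend : Tendsto (fun l : ℕ => Real.log l) atTop atTop :=
    Real.tendsto_log_atTop.comp tendsto_natCast_atTop_atTop
  filter_upwards [eventually_ge_atTop 2, hlogtend.eventually_ge_atTop K] with l hl2 hlK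
  obtain ⟨k, rfl⟩ : ∃ k, l = k + 2 := ⟨l - 2, by omega⟩
  -- abbreviations
  have hred : k + 2 - 1 = k + 1 := by omega
  have hsm : ∑ i ∈ Finset.Icc 1 (k + 2), m i
      = (∑ i ∈ Finset.Icc 1 (k + 1), m i) + m (k + 2) :=
    Finset.sum_Icc_succ_top (by omega) m
  have hFE : Fidx m e (k + 2) = Eidx m e (k + 1) + m (k + 2) := by
    unfold Fidx Eidx
    rw [hred, hsm]; ring
  have hABv : Aval m e (k + 2) = Bval m e (k + 1) + m (k + 2) := by
    unfold Aval Bval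
    rw [hred, hsm]; ring
  have hm2 : 2 ≤ m (k + 2) := le_trans (by omega) (hml (k + 2) (by omega))
  have hF2 : 2 ≤ Fidx m e (k + 2) := le_trans (by omega) (hF (k + 2) (by omega))
  have hB2 : 2 ≤ Bval m e (k + 1) := by
    unfold Bval
    have h1 : m 1 ≤ ∑ i ∈ Finset.Icc 1 (k + 1), m i :=
      Finset.single_le_sum (fun _ _ => Nat.zero_le _) (Finset.mem_Icc.2 ⟨le_rfl, by omega⟩)
    have h2 : e 1 ^ 2 ≤ ∑ i ∈ Finset.Icc 1 (k + 1), e i ^ 2 :=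
      Finset.single_le_sum (f := fun i => e i ^ 2) (fun _ _ => Nat.zero_le _)
        (Finset.mem_Icc.2 ⟨le_rfl, by omega⟩)
    have h3 := hm1 1 le_rfl
    have h4 := he1 1 le_rfl
    have h5 : 1 ≤ e 1 ^ 2 := Nat.one_le_pow _ _ h4
    omega
  have hA2 : 2 ≤ Aval m e (k + 2) := by omega
  have hBA : Bval m e (k + 1) ≤ Aval m e (k + 2) := by omega
  -- A ≤ F ^ 3
  have hAF : Aval m e (k + 2) ≤ Fidx m e (k + 2) ^ 3 := by
    have hsq := st8_sum_sq_le (Finset.Icc 1 (k + 1)) e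
    have hFval : Fidx m e (k + 2)
        = (∑ i ∈ Finset.Icc 1 (k + 2), m i) + ∑ i ∈ Finset.Icc 1 (k + 1), e i := by
      unfold Fidx; rw [hred]
    have hAval : Aval m e (k + 2)
        = (∑ i ∈ Finset.Icc 1 (k + 2), m i) + ∑ i ∈ Finset.Icc 1 (k + 1), e i ^ 2 := by
      unfold Aval; rw [hred]
    set S1 := ∑ i ∈ Finset.Icc 1 (k + 2), m i
    set S2 := ∑ i ∈ Finset.Icc 1 (k + 1), e i
    have h2F : 2 ≤ S1 + S2 := by rw [← hFval]; exact hF2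
    rw [hAval, hFval]
    nlinarith [hsq, h2F, sq_nonneg (S1 + S2), Nat.zero_le S1, Nat.zero_le S2]
  -- logarithms
  set t := Real.log (Fidx m e (k + 2) : ℝ) with ht
  have hF0 : (0:ℝ) < (Fidx m e (k + 2) : ℝ) := by exact_mod_cast Nat.lt_of_lt_of_le (by norm_num) hF2
  have htK : K ≤ t := by
    have h1 : ((k + 2 : ℕ) : ℝ) ≤ (Fidx m e (k + 2) : ℝ) := by
      exact_mod_cast hF (k + 2) (by omega)
    have h2 : Real.log ((k + 2 : ℕ) : ℝ) ≤ t := by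
      apply Real.log_le_log (by positivity) h1
    exact le_trans hlK h2
  have ht1 : (1:ℝ) ≤ t := le_trans (by rw [hK]; nlinarith [sq_nonneg (12 * c₁)]) htK
  have ht0 : (0:ℝ) < t := lt_of_lt_of_le one_pos ht1
  have hlogA : Real.log (Aval m e (k + 2) : ℝ) ≤ 3 * t := by
    have h1 : ((Aval m e (k + 2) : ℕ) : ℝ) ≤ ((Fidx m e (k + 2) : ℝ)) ^ 3 := by
      have := hAF
      push_cast
      exact_mod_cast Nat.cast_le.2 this
    calc Real.log (Aval m e (k + 2) : ℝ)
        ≤ Real.log ((Fidx m e (k + 2) : ℝ) ^ 3) :=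
          Real.log_le_log (by exact_mod_cast Nat.lt_of_lt_of_le (by norm_num) hA2) h1
      _ = 3 * t := by rw [Real.log_pow]; norm_num [ht]
  have hlogB : Real.log (Bval m e (k + 1) : ℝ) ≤ 3 * t := by
    refine le_trans ?_ hlogA
    apply Real.log_le_log (by exact_mod_cast Nat.lt_of_lt_of_le (by norm_num) hB2)
    exact_mod_cast hBA
  have hlogA0 : 0 ≤ Real.log (Aval m e (k + 2) : ℝ) :=
    Real.log_nonneg (by exact_mod_cast le_trans (by norm_num) hA2)
  have hlogB0 : 0 ≤ Real.log (Bval m e (k + 1) : ℝ) :=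
    Real.log_nonneg (by exact_mod_cast le_trans (by norm_num) hB2)
  -- (3t)^{3/2} ≤ 6 t^{3/2}
  have h36 : (3:ℝ) ^ (3/2 : ℝ) ≤ 6 := by
    rw [show (3/2 : ℝ) = 1 + 1/2 by norm_num, Real.rpow_add (by norm_num : (0:ℝ) < 3),
      Real.rpow_one, ← Real.sqrt_eq_rpow]
    have h4 : Real.sqrt 4 = 2 := by
      rw [show (4:ℝ) = 2 ^ 2 by norm_num, Real.sqrt_sq (by norm_num : (0:ℝ) ≤ 2)]
    have h34 : Real.sqrt 3 ≤ Real.sqrt 4 := Real.sqrt_le_sqrt (by norm_num)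
    rw [h4] at h34
    nlinarith [Real.sqrt_nonneg 3]
  have hpow : ∀ u : ℝ, 0 ≤ u → u ≤ 3 * t → u ^ (3/2 : ℝ) ≤ 6 * t ^ (3/2 : ℝ) := by
    intro u hu0 hu
    calc u ^ (3/2 : ℝ) ≤ (3 * t) ^ (3/2 : ℝ) := Real.rpow_le_rpow hu0 hu (by norm_num)
      _ = 3 ^ (3/2 : ℝ) * t ^ (3/2 : ℝ) := Real.mul_rpow (by norm_num) ht0.le
      _ ≤ 6 * t ^ (3/2 : ℝ) := by
          have := Real.rpow_nonneg ht0.le (3/2 : ℝ)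
          nlinarith
  -- 12 c₁ t^{3/2} ≤ t^2
  have hsqrt : 12 * c₁ ≤ Real.sqrt t := by
    rw [Real.le_sqrt (by positivity) ht0.le]
    have : (12 * c₁) ^ 2 ≤ K := by rw [hK]; nlinarith
    linarith
  have ht2eq : t ^ 2 = t ^ (3/2 : ℝ) * Real.sqrt t := by
    rw [Real.sqrt_eq_rpow, ← Real.rpow_add ht0,
      show (3/2 + 1/2 : ℝ) = 2 by norm_num, Real.rpow_two]
  have h12 : 12 * c₁ * t ^ (3/2 : ℝ) ≤ t ^ 2 := by
    rw [ht2eq]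
    have h32 : (0:ℝ) ≤ t ^ (3/2 : ℝ) := Real.rpow_nonneg ht0.le _
    nlinarith
  -- log m ≤ t
  have hmF : m (k + 2) ≤ Fidx m e (k + 2) := by omega
  have hlogm2 : (Real.log (m (k + 2) : ℝ)) ^ 2 ≤ t ^ 2 := by
    have h1 : Real.log (m (k + 2) : ℝ) ≤ t := by
      apply Real.log_le_log (by exact_mod_cast Nat.lt_of_lt_of_le (by norm_num) hm2)
      exact_mod_cast hmF
    have h0 : (0:ℝ) ≤ Real.log (m (k + 2) : ℝ) :=
      Real.log_nonneg (by exact_mod_cast le_trans (by norm_num) hm2)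
    nlinarith
  -- condition (i)
  have hEcond : (Eidx m e (k + 1) : ℝ) ≤ (Real.log (m (k + 2) : ℝ)) ^ 2 := by
    have := hcondi (k + 2) (by omega)
    rwa [hred] at this
  -- block identity for the linear block
  have hblock := (ha (k + 2) (by omega)).1
  rw [hred] at hblock
  -- the main per-interval bound
  have hmain : ∀ p1 p2 : ℝ, 0 ≤ p1 → p1 < p2 → p2 ≤ 1 →
      |(((Finset.Icc 1 (Fidx m e (k + 2))).filter
          (fun n => Int.fract ((a n : ℝ) * α) ∈ Set.Ico p1 p2)).card : ℝ)
        - (Fidx m e (k + 2) : ℝ) * (p2 - p1)| ≤ 2 * t ^ 2 := by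
    intro p1 p2 hp1 hp2 hp3
    set Q : ℕ → Prop := fun n => Int.fract ((a n : ℝ) * α) ∈ Set.Ico p1 p2 with hQ
    set Q' : ℕ → Prop := fun n => Int.fract ((n : ℝ) * α) ∈ Set.Ico p1 p2 with hQ'
    set E := Eidx m e (k + 1)
    set M := m (k + 2)
    set Bv := Bval m e (k + 1)
    set Av := Aval m e (k + 2)
    -- split count
    have hsplit : ((Finset.Icc 1 (Fidx m e (k + 2))).filter Q).card
        = ((Finset.Icc 1 E).filter Q).card
          + ((Finset.Icc (E + 1) (E + M)).filter Q).card := by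
      rw [hFE]; exact st8_count_split Q E M
    -- the linear block is a shift of the nα-sequence
    have hcongr : (Finset.Icc 1 M).filter (fun j => Q (E + j))
        = (Finset.Icc 1 M).filter (fun j => Q' (Bv + j)) := by
      apply Finset.filter_congr
      intro j hj
      simp only [Finset.mem_Icc] at hj
      have haj : a (E + j) = Bv + j := by
        have h := hblock (E + j) (by omega) (by omega)
        rw [h]
        congr 1
        omega
      simp only [hQ, hQ', haj]
    have hshift : ((Finset.Icc (E + 1) (E + M)).filter Q).card
        = ((Finset.Icc 1 M).filter (fun j => Q' (Bv + j))).card := by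
      rw [st8_count_shift Q E M, hcongr]
    -- merge with the plain nα-counts
    have hmerge : ((Finset.Icc 1 Av).filter Q').card
        = ((Finset.Icc 1 Bv).filter Q').card
          + ((Finset.Icc 1 M).filter (fun j => Q' (Bv + j))).card := by
      rw [hABv]
      rw [st8_count_split Q' Bv M, st8_count_shift Q' Bv M]
    -- real-number identities
    have h1 : (((Finset.Icc 1 (Fidx m e (k + 2))).filter Q).card : ℝ)
        = (((Finset.Icc 1 E).filter Q).card : ℝ)
          + (((Finset.Icc 1 M).filter (fun j => Q' (Bv + j))).card : ℝ) := by
      rw [hsplit, hshift]; push_cast; ring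
    have h2 : (((Finset.Icc 1 Av).filter Q').card : ℝ)
        = (((Finset.Icc 1 Bv).filter Q').card : ℝ)
          + (((Finset.Icc 1 M).filter (fun j => Q' (Bv + j))).card : ℝ) := by
      rw [hmerge]; push_cast; ring
    set CE : ℝ := (((Finset.Icc 1 E).filter Q).card : ℝ) with hCEdef
    set CL : ℝ := (((Finset.Icc 1 M).filter (fun j => Q' (Bv + j))).card : ℝ) with hCLdef
    set cA : ℝ := (((Finset.Icc 1 Av).filter Q').card : ℝ) with hcAdef
    set cB : ℝ := (((Finset.Icc 1 Bv).filter Q').card : ℝ) with hcBdef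
    have h3 : (Fidx m e (k + 2) : ℝ) = (E : ℝ) + (M : ℝ) := by exact_mod_cast hFE
    have h4 : (Av : ℝ) = (Bv : ℝ) + (M : ℝ) := by exact_mod_cast hABv
    have hid : (((Finset.Icc 1 (Fidx m e (k + 2))).filter Q).card : ℝ)
        - (Fidx m e (k + 2) : ℝ) * (p2 - p1)
        = (CE - (E : ℝ) * (p2 - p1))
          + ((cA - (Av : ℝ) * (p2 - p1)) - (cB - (Bv : ℝ) * (p2 - p1))) := by
      linear_combination h1 - h2 - (p2 - p1) * h3 + (p2 - p1) * h4
    -- estimates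
    have hCEle : CE ≤ (E : ℝ) := by
      have h := Finset.card_filter_le (Finset.Icc 1 E) Q
      have hc : (Finset.Icc 1 E).card = E := by rw [Nat.card_Icc]; omega
      rw [hCEdef]
      exact_mod_cast hc ▸ h
    have hCE0 : (0:ℝ) ≤ CE := by rw [hCEdef]; exact Nat.cast_nonneg _
    have hE0 : (0:ℝ) ≤ (E : ℝ) := Nat.cast_nonneg _
    have hlen1 : p2 - p1 ≤ 1 := by linarith
    have hlen0 : (0:ℝ) ≤ p2 - p1 := by linarith
    have hEl : (E : ℝ) * (p2 - p1) ≤ (E : ℝ) := mul_le_of_le_one_right hE0 hlen1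
    have hEl0 : (0:ℝ) ≤ (E : ℝ) * (p2 - p1) := mul_nonneg hE0 hlen0
    have hCE : |CE - (E : ℝ) * (p2 - p1)| ≤ (E : ℝ) := by
      rw [abs_le]; constructor <;> linarith
    have hcAe : |cA - (Av : ℝ) * (p2 - p1)| ≤ c₁ * (Real.log (Av : ℝ)) ^ (3/2 : ℝ) :=
      st8_count_est α c₁ hα Av hA2 hp1 hp2 hp3
    have hcBe : |cB - (Bv : ℝ) * (p2 - p1)| ≤ c₁ * (Real.log (Bv : ℝ)) ^ (3/2 : ℝ) :=
      st8_count_est α c₁ hα Bv hB2 hp1 hp2 hp3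
    -- combine
    have htri : |(((Finset.Icc 1 (Fidx m e (k + 2))).filter Q).card : ℝ)
        - (Fidx m e (k + 2) : ℝ) * (p2 - p1)|
        ≤ |CE - (E : ℝ) * (p2 - p1)| + (|cA - (Av : ℝ) * (p2 - p1)|
            + |cB - (Bv : ℝ) * (p2 - p1)|) := by
      rw [hid]
      refine le_trans (abs_add_le _ _) ?_
      exact add_le_add_right (abs_sub _ _) _
    have hApow : c₁ * (Real.log (Av : ℝ)) ^ (3/2 : ℝ) ≤ 6 * c₁ * t ^ (3/2 : ℝ) := by
      have h' := mul_le_mul_of_nonneg_left (hpow (Real.log (Av : ℝ)) hlogA0 hlogA) hc₁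
      linarith
    have hBpow : c₁ * (Real.log (Bv : ℝ)) ^ (3/2 : ℝ) ≤ 6 * c₁ * t ^ (3/2 : ℝ) := by
      have h' := mul_le_mul_of_nonneg_left (hpow (Real.log (Bv : ℝ)) hlogB0 hlogB) hc₁
      linarith
    calc |(((Finset.Icc 1 (Fidx m e (k + 2))).filter Q).card : ℝ)
        - (Fidx m e (k + 2) : ℝ) * (p2 - p1)|
        ≤ |CE - (E : ℝ) * (p2 - p1)| + (|cA - (Av : ℝ) * (p2 - p1)|
            + |cB - (Bv : ℝ) * (p2 - p1)|) := htri
      _ ≤ (E : ℝ) + (c₁ * (Real.log (Av : ℝ)) ^ (3/2 : ℝ)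
            + c₁ * (Real.log (Bv : ℝ)) ^ (3/2 : ℝ)) :=
          add_le_add hCE (add_le_add hcAe hcBe)
      _ ≤ (Real.log (m (k + 2) : ℝ)) ^ 2 + (6 * c₁ * t ^ (3/2 : ℝ) + 6 * c₁ * t ^ (3/2 : ℝ)) :=
          add_le_add hEcond (add_le_add hApow hBpow)
      _ ≤ t ^ 2 + 12 * c₁ * t ^ (3/2 : ℝ) := by linarith
      _ ≤ 2 * t ^ 2 := by linarith
  -- conclude via the supremum
  exact st8_disc_mul_le (fun n => Int.fract ((a n : ℝ) * α)) (Fidx m e (k + 2))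
    (by omega) (2 * t ^ 2) hmain
end

section
/- Let 0 < γ ≤ 1/2 and let (a_n)_{n≥1} be the block-constructed sequence built from strictly increasing sequences (m_j), (e_j) of positive integers satisfying condition (i): (log m_l)² ≥ E_{l−1} for all l ≥ 2, and condition (ii): e_l = ⌈ F_l^{2γ} / log(F_l^{2γ}) ⌉ for all l. Let α be a real number such that the discrepancy of ({n α})_{n≥1} satisfies N·D_N ≤ c̄₁(α)·(log N)^{3/2} for all N ≥ 2, and the discrepancy of ({n² α})_{n≥1} satisfies N·D_N ≤ c̄₂(α)·N^{1/2}·(log N)^{3/8} for all N ≥ 2. Then for all sufficiently large l and all N with F_l < N ≤ E_l, the discrepancy of the first N terms of ({a_n α})_{n≥1} satisfies N·D_N ≤ max(1, c̄₂(α)) · 2^{1+γ} · N^γ. -/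
open Finset MeasureTheory Filter

section disclem
variable (N : ℕ) (x : ℕ → ℝ)

lemma cnt_le (u v : ℝ) : (((Finset.Icc 1 N).filter (fun n => x n ∈ Set.Ico u v)).card : ℝ) ≤ N := by
  have := Finset.card_filter_le (Finset.Icc 1 N) (fun n => x n ∈ Set.Ico u v)
  have h2 : (Finset.Icc 1 N).card = N := by rw [Nat.card_Icc]; omega
  exact_mod_cast h2 ▸ this

lemma cnt_div_mem (u v : ℝ) : (0:ℝ) ≤ (((Finset.Icc 1 N).filter (fun n => x n ∈ Set.Ico u v)).card : ℝ) / N ∧ (((Finset.Icc 1 N).filter (fun n => x n ∈ Set.Ico u v)).card : ℝ) / N ≤ 1 := by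
  rcases Nat.eq_zero_or_pos N with h | h
  · subst h; simp
  · constructor
    · positivity
    · rw [div_le_one (by exact_mod_cast h)]; exact cnt_le N x u v

lemma disc_bdd : BddAbove (Set.range fun p : {p : ℝ × ℝ // 0 ≤ p.1 ∧ p.1 < p.2 ∧ p.2 ≤ 1} =>
    |(((Finset.Icc 1 N).filter (fun n => x n ∈ Set.Ico p.1.1 p.1.2)).card : ℝ) / N
      - (p.1.2 - p.1.1)|) := by
  refine ⟨2, ?_⟩
  rintro _ ⟨⟨⟨u, v⟩, hu, huv, hv⟩, rfl⟩
  obtain ⟨h0, h1⟩ := cnt_div_mem N x u v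
  rw [abs_le]; constructor <;> simp only <;> nlinarith

instance : Nonempty {p : ℝ × ℝ // 0 ≤ p.1 ∧ p.1 < p.2 ∧ p.2 ≤ 1} :=
  ⟨⟨(0, 1), le_refl _, zero_lt_one, le_refl _⟩⟩

lemma disc_nonneg : 0 ≤ disc N x := by
  have h := le_ciSup (disc_bdd N x) (⟨(0, 1), le_refl _, zero_lt_one, le_refl _⟩ :
    {p : ℝ × ℝ // 0 ≤ p.1 ∧ p.1 < p.2 ∧ p.2 ≤ 1})
  exact le_trans (abs_nonneg _) h

lemma disc_le_one : disc N x ≤ 1 := by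
  apply ciSup_le
  rintro ⟨⟨u, v⟩, hu, huv, hv⟩
  obtain ⟨h0, h1⟩ := cnt_div_mem N x u v
  rw [abs_le]; constructor <;> simp only <;> nlinarith

lemma abs_cnt_le_disc (hN : 1 ≤ N) {u v : ℝ} (hu : 0 ≤ u) (huv : u ≤ v) (hv : v ≤ 1) :
    |(((Finset.Icc 1 N).filter (fun n => x n ∈ Set.Ico u v)).card : ℝ) - N * (v - u)| ≤
      N * disc N x := by
  rcases eq_or_lt_of_le huv with rfl | hlt
  · simp only [Set.Ico_self, Set.mem_empty_iff_false, Finset.filter_false, Finset.card_empty]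
    simpa using mul_nonneg (by positivity) (disc_nonneg N x)
  · have h := le_ciSup (disc_bdd N x) (⟨(u, v), hu, hlt, hv⟩ :
      {p : ℝ × ℝ // 0 ≤ p.1 ∧ p.1 < p.2 ∧ p.2 ≤ 1})
    have hN0 : (0:ℝ) < N := by exact_mod_cast hN
    have key : |(((Finset.Icc 1 N).filter (fun n => x n ∈ Set.Ico u v)).card : ℝ) - N * (v - u)|
        = N * |(((Finset.Icc 1 N).filter (fun n => x n ∈ Set.Ico u v)).card : ℝ) / N - (v - u)| := by
      rw [← abs_of_pos hN0, ← abs_mul]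
      congr 1
      field_simp
      rw [abs_of_pos hN0]; ring
    rw [key]
    exact mul_le_mul_of_nonneg_left h hN0.le
end disclem



lemma fract_add_fract (x y : ℝ) :
    Int.fract (Int.fract x + Int.fract y) = Int.fract (x + y) := by
  have h : Int.fract x + Int.fract y = (x + y) - ((⌊x⌋ + ⌊y⌋ : ℤ) : ℝ) := by
    rw [Int.fract, Int.fract]; push_cast; ring
  rw [h, Int.fract_sub_intCast]

lemma fract_mem_Ico_iff {β t u v : ℝ} (hβ0 : 0 ≤ β) (hβ1 : β < 1) (ht0 : 0 ≤ t) (ht1 : t < 1)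
    (hu : 0 ≤ u) (hv : v ≤ 1) :
    Int.fract (β + t) ∈ Set.Ico u v ↔
      (t ∈ Set.Ico (max (u - β) 0) (max (v - β) 0) ∨
       t ∈ Set.Ico (min (u + 1 - β) 1) (min (v + 1 - β) 1)) := by
  simp only [Set.mem_Ico, max_le_iff, lt_max_iff, le_min_iff, min_le_iff, lt_min_iff]
  rcases lt_or_ge (β + t) 1 with h | h
  · rw [Int.fract_eq_self.mpr ⟨by linarith, h⟩]
    constructor
    · rintro ⟨h1, h2⟩
      exact Or.inl ⟨⟨by linarith, ht0⟩, Or.inl (by linarith)⟩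
    · rintro (⟨⟨h1, -⟩, h2 | h2⟩ | ⟨h1 | h1, h2, h3⟩) <;> constructor <;> linarith
  · have : Int.fract (β + t) = β + t - 1 := by
      rw [← Int.fract_sub_intCast (β + t) 1]
      push_cast
      exact Int.fract_eq_self.mpr ⟨by linarith, by linarith⟩
    rw [this]
    constructor
    · rintro ⟨h1, h2⟩
      exact Or.inr ⟨Or.inl (by linarith), by linarith, ht1⟩
    · rintro (⟨⟨h1, -⟩, h2 | h2⟩ | ⟨h1 | h1, h2, h3⟩) <;> constructor <;> linarith

lemma max_min_identity (a : ℝ) : max a 0 + min (a + 1) 1 = a + 1 := by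
  rcases le_total a 0 with h | h
  · rw [max_eq_right h, min_eq_left (by linarith), zero_add]
  · rw [max_eq_left h, min_eq_right (by linarith)]

lemma block_count_bound (x z : ℕ → ℝ) (β : ℝ) (M s : ℕ)
    (hz : ∀ k, z k ∈ Set.Ico (0:ℝ) 1) (hβ : β ∈ Set.Ico (0:ℝ) 1)
    (hxz : ∀ k, 1 ≤ k → k ≤ M → x (s + k) = Int.fract (β + z k))
    (hM : 1 ≤ M) {u v : ℝ} (hu : 0 ≤ u) (huv : u < v) (hv : v ≤ 1) :
    |(((Finset.Icc (s+1) (s+M)).filter (fun n => x n ∈ Set.Ico u v)).card : ℝ) - M * (v - u)|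
      ≤ 2 * M * disc M z := by
  set u₁ := max (u - β) 0 with hu₁
  set v₁ := max (v - β) 0 with hv₁
  set u₂ := min (u + 1 - β) 1 with hu₂
  set v₂ := min (v + 1 - β) 1 with hv₂
  have hcard : ((Finset.Icc (s+1) (s+M)).filter (fun n => x n ∈ Set.Ico u v)).card
      = ((Finset.Icc 1 M).filter (fun k => x (s + k) ∈ Set.Ico u v)).card := by
    apply Finset.card_bij' (i := fun n _ => n - s) (j := fun k _ => s + k)
    · intro n hn
      simp only [Finset.mem_filter, Finset.mem_Icc] at hn ⊢
      refine ⟨by omega, ?_⟩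
      have : s + (n - s) = n := by omega
      rw [this]; exact hn.2
    · intro k hk
      simp only [Finset.mem_filter, Finset.mem_Icc] at hk ⊢
      exact ⟨by omega, hk.2⟩
    · intro n hn
      simp only [Finset.mem_filter, Finset.mem_Icc] at hn
      omega
    · intro k hk
      simp only [Finset.mem_filter, Finset.mem_Icc] at hk
      omega
  have hpred : ∀ k ∈ Finset.Icc 1 M,
      (x (s+k) ∈ Set.Ico u v ↔ (z k ∈ Set.Ico u₁ v₁ ∨ z k ∈ Set.Ico u₂ v₂)) := by
    intro k hk
    rw [Finset.mem_Icc] at hk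
    rw [hxz k hk.1 hk.2]
    exact fract_mem_Ico_iff hβ.1 hβ.2 (hz k).1 (hz k).2 hu hv
  have hsplit : ((Finset.Icc 1 M).filter (fun k => x (s + k) ∈ Set.Ico u v)).card
      = ((Finset.Icc 1 M).filter (fun k => z k ∈ Set.Ico u₁ v₁)).card
        + ((Finset.Icc 1 M).filter (fun k => z k ∈ Set.Ico u₂ v₂)).card := by
    rw [Finset.filter_congr hpred, Finset.filter_or]
    apply Finset.card_union_of_disjoint
    rw [Finset.disjoint_left]
    intro k hk1 hk2
    simp only [Finset.mem_filter, Set.mem_Ico] at hk1 hk2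
    rcases lt_max_iff.mp hk1.2.2 with h1 | h1
    · rcases min_le_iff.mp hk2.2.1 with h2 | h2
      · linarith
      · exact absurd h2 (not_le.mpr (hz k).2)
    · exact absurd h1 (not_lt.mpr (hz k).1)
  have hb1 : |(((Finset.Icc 1 M).filter (fun k => z k ∈ Set.Ico u₁ v₁)).card : ℝ)
      - M * (v₁ - u₁)| ≤ M * disc M z :=
    abs_cnt_le_disc M z hM (le_max_right _ _)
      (max_le_max (by linarith) le_rfl) (max_le (by linarith [hβ.1]) zero_le_one)
  have hb2 : |(((Finset.Icc 1 M).filter (fun k => z k ∈ Set.Ico u₂ v₂)).card : ℝ)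
      - M * (v₂ - u₂)| ≤ M * disc M z :=
    abs_cnt_le_disc M z hM (le_min (by linarith [hβ.2]) zero_le_one)
      (min_le_min (by linarith) le_rfl) (min_le_right _ _)
  have hlen : (v₁ - u₁) + (v₂ - u₂) = v - u := by
    have i1 := max_min_identity (v - β)
    have i2 := max_min_identity (u - β)
    have e1 : v + 1 - β = (v - β) + 1 := by ring
    have e2 : u + 1 - β = (u - β) + 1 := by ring
    rw [hv₁, hu₁, hv₂, hu₂, e1, e2]
    linarith
  rw [hcard, hsplit]
  push_cast
  have key : (((Finset.Icc 1 M).filter (fun k => z k ∈ Set.Ico u₁ v₁)).card : ℝ)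
      + (((Finset.Icc 1 M).filter (fun k => z k ∈ Set.Ico u₂ v₂)).card : ℝ) - M * (v - u)
      = ((((Finset.Icc 1 M).filter (fun k => z k ∈ Set.Ico u₁ v₁)).card : ℝ) - M * (v₁ - u₁))
        + ((((Finset.Icc 1 M).filter (fun k => z k ∈ Set.Ico u₂ v₂)).card : ℝ) - M * (v₂ - u₂)) := by
    rw [show (v:ℝ) - u = (v₁ - u₁) + (v₂ - u₂) from hlen.symm]; ring
  rw [key]
  calc _ ≤ _ := abs_add_le _ _
    _ ≤ (M:ℝ) * disc M z + M * disc M z := add_le_add hb1 hb2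
    _ = 2 * M * disc M z := by ring

lemma Fidx_succ (m e : ℕ → ℕ) (k : ℕ) : Fidx m e (k + 1) = Eidx m e k + m (k + 1) := by
  unfold Fidx Eidx
  rw [Finset.sum_Icc_succ_top (by omega : 1 ≤ k + 1) m]
  simp only [Nat.add_sub_cancel]
  ring

lemma Eidx_succ (m e : ℕ → ℕ) (k : ℕ) : Eidx m e (k + 1) = Fidx m e (k + 1) + e (k + 1) := by
  unfold Fidx Eidx
  rw [Finset.sum_Icc_succ_top (by omega : 1 ≤ k + 1) e]
  simp only [Nat.add_sub_cancel]
  ring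

lemma le_of_strictMonoOn {m : ℕ → ℕ} (hm : StrictMonoOn m (Set.Ici 1))
    (hm1 : 0 < m 1) : ∀ j, 1 ≤ j → j ≤ m j := by
  intro j hj
  induction j with
  | zero => omega
  | succ k ih =>
    rcases Nat.eq_or_lt_of_le hj with h | h
    · have hk0 : k = 0 := by omega
      subst hk0; exact hm1
    · have hk : 1 ≤ k := by omega
      have := hm (Set.mem_Ici.mpr hk) (Set.mem_Ici.mpr (by omega : 1 ≤ k + 1)) (by omega)
      have := ih hk
      omega

lemma m_le_Fidx (m e : ℕ → ℕ) (l : ℕ) (hl : 1 ≤ l) : m l ≤ Fidx m e l := by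
  have : m l ≤ ∑ i ∈ Finset.Icc 1 l, m i :=
    Finset.single_le_sum (fun i _ => Nat.zero_le _) (Finset.mem_Icc.mpr ⟨hl, le_refl l⟩)
  unfold Fidx; omega

lemma card_filter_Icc_split (P : ℕ → Prop) [DecidablePred P] {E F N : ℕ}
    (h1 : E ≤ F) (h2 : F ≤ N) :
    ((Finset.Icc 1 N).filter P).card
      = ((Finset.Icc 1 E).filter P).card + ((Finset.Icc (E+1) F).filter P).card
        + ((Finset.Icc (F+1) N).filter P).card := by
  have hunion : Finset.Icc 1 N = (Finset.Icc 1 E ∪ Finset.Icc (E+1) F) ∪ Finset.Icc (F+1) N := by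
    ext n; simp only [Finset.mem_Icc, Finset.mem_union]; omega
  have hd1 : Disjoint (Finset.Icc 1 E) (Finset.Icc (E+1) F) := by
    rw [Finset.disjoint_left]; intro n hn hn'
    simp only [Finset.mem_Icc] at hn hn'; omega
  have hd2a : Disjoint (Finset.Icc 1 E) (Finset.Icc (F+1) N) := by
    rw [Finset.disjoint_left]; intro n hn hn'
    simp only [Finset.mem_Icc] at hn hn'; omega
  have hd2b : Disjoint (Finset.Icc (E+1) F) (Finset.Icc (F+1) N) := by
    rw [Finset.disjoint_left]; intro n hn hn'
    simp only [Finset.mem_Icc] at hn hn'; omega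
  rw [hunion, Finset.filter_union, Finset.filter_union,
    Finset.card_union_of_disjoint (Finset.disjoint_union_left.mpr
      ⟨Finset.disjoint_filter_filter hd2a, Finset.disjoint_filter_filter hd2b⟩),
    Finset.card_union_of_disjoint (Finset.disjoint_filter_filter hd1)]

lemma prefix_bound (x : ℕ → ℝ) (E : ℕ) {u v : ℝ} (hu : 0 ≤ u) (huv : u ≤ v) (hv : v ≤ 1) :
    |(((Finset.Icc 1 E).filter (fun n => x n ∈ Set.Ico u v)).card : ℝ) - E * (v - u)| ≤ E := by
  have h1 := cnt_le E x u v
  have h2 : (0:ℝ) ≤ (((Finset.Icc 1 E).filter (fun n => x n ∈ Set.Ico u v)).card : ℝ) :=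
    Nat.cast_nonneg _
  have h3 : (0:ℝ) ≤ E := Nat.cast_nonneg _
  rw [abs_le]; constructor <;> nlinarith


set_option maxHeartbeats 2000000 in
theorem statement9 (γ : ℝ) (hγ0 : 0 < γ) (hγ : γ ≤ 1 / 2)
    (m e : ℕ → ℕ) (hm : StrictMonoOn m (Set.Ici 1)) (he : StrictMonoOn e (Set.Ici 1))
    (hm1 : ∀ j, 1 ≤ j → 0 < m j) (he1 : ∀ j, 1 ≤ j → 0 < e j)
    (a : ℕ → ℕ) (ha : IsBlockSeq m e a)
    (hcondi : ∀ l, 2 ≤ l → (Eidx m e (l - 1) : ℝ) ≤ (Real.log (m l)) ^ 2)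
    (hcondii : ∀ l, 1 ≤ l →
      e l = ⌈(Fidx m e l : ℝ) ^ (2 * γ) / Real.log ((Fidx m e l : ℝ) ^ (2 * γ))⌉₊)
    (α : ℝ) (c₁ c₂ : ℝ)
    (hα1 : ∀ N : ℕ, 2 ≤ N →
      (N : ℝ) * disc N (fun n => Int.fract ((n : ℝ) * α)) ≤ c₁ * (Real.log N) ^ (3 / 2 : ℝ))
    (hα2 : ∀ N : ℕ, 2 ≤ N →
      (N : ℝ) * disc N (fun n => Int.fract ((n : ℝ) ^ 2 * α)) ≤
        c₂ * (N : ℝ) ^ (1 / 2 : ℝ) * (Real.log N) ^ (3 / 8 : ℝ)) :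
    ∀ᶠ l : ℕ in atTop, ∀ N : ℕ, Fidx m e l < N → N ≤ Eidx m e l →
      (N : ℝ) * disc N (fun n => Int.fract ((a n : ℝ) * α)) ≤
        max 1 c₂ * 2 ^ (1 + γ) * (N : ℝ) ^ γ := by
  have hc₁ : 0 ≤ c₁ := by
    have hd := disc_nonneg 2 (fun n => Int.fract ((n : ℝ) * α))
    have h1 := hα1 2 le_rfl
    have e2 : ((2:ℕ):ℝ) = 2 := by norm_num
    rw [e2] at h1
    have ht : (0:ℝ) < Real.log 2 ^ (3/2 : ℝ) :=
      Real.rpow_pos_of_pos (Real.log_pos one_lt_two) _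
    by_contra hc
    push_neg at hc
    have h2 : c₁ * Real.log 2 ^ (3/2:ℝ) < 0 := mul_neg_of_neg_of_pos hc ht
    nlinarith
  have hc₂ : 0 ≤ c₂ := by
    have hd := disc_nonneg 2 (fun n => Int.fract ((n : ℝ) ^ 2 * α))
    have h1 := hα2 2 le_rfl
    have e2 : ((2:ℕ):ℝ) = 2 := by norm_num
    rw [e2] at h1
    have ht1 : (0:ℝ) < (2:ℝ) ^ (1/2 : ℝ) := Real.rpow_pos_of_pos two_pos _
    have ht2 : (0:ℝ) < Real.log 2 ^ (3/8 : ℝ) :=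
      Real.rpow_pos_of_pos (Real.log_pos one_lt_two) _
    by_contra hc
    push_neg at hc
    have h2 : c₂ * (2:ℝ) ^ (1/2:ℝ) * Real.log 2 ^ (3/8:ℝ) < 0 :=
      mul_neg_of_neg_of_pos (mul_neg_of_neg_of_pos hc ht1) ht2
    nlinarith
  -- eventual prefix bound
  have hLO := (isLittleO_log_rpow_rpow_atTop 2 hγ0).def
    (show (0:ℝ) < 1/(4*(1+2*c₁)) by positivity)
  have hev2 : ∀ᶠ x:ℝ in atTop, (4:ℝ) ≤ x ^ γ :=
    (tendsto_rpow_atTop hγ0).eventually_ge_atTop 4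
  have hev1 : ∀ᶠ x:ℝ in atTop, (1+2*c₁) * Real.log x ^ (2:ℝ) + 2 ≤ x ^ γ := by
    filter_upwards [hLO, hev2, eventually_ge_atTop (1:ℝ)] with x hx h4 hx1
    have hlx : 0 ≤ Real.log x := Real.log_nonneg hx1
    have hx0 : (0:ℝ) ≤ x := by linarith
    rw [Real.norm_eq_abs, Real.norm_eq_abs, abs_of_nonneg (Real.rpow_nonneg hlx _),
      abs_of_nonneg (Real.rpow_nonneg hx0 _)] at hx
    have h1 : (1+2*c₁) * Real.log x ^ (2:ℝ) ≤ x^γ / 4 := by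
      calc (1+2*c₁) * Real.log x ^ (2:ℝ) ≤ (1+2*c₁) * (1/(4*(1+2*c₁)) * x ^ γ) :=
            mul_le_mul_of_nonneg_left hx (by linarith)
        _ = x^γ/4 := by field_simp
    linarith
  obtain ⟨x₀, hx₀⟩ := eventually_atTop.mp hev1
  obtain ⟨x₄, hx₄⟩ := eventually_atTop.mp hev2
  set L0 : ℕ := 3 + ⌈x₀⌉₊ + ⌈x₄⌉₊ + ⌈Real.exp (65536/(2*γ))⌉₊ with hL0
  refine eventually_atTop.mpr ⟨L0, fun l hlL0 => ?_⟩
  intro N hNF hNE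
  obtain ⟨k, rfl⟩ : ∃ k, l = k + 1 := ⟨l - 1, by omega⟩
  -- basic index facts
  have hFE : Fidx m e (k+1) = Eidx m e k + m (k+1) := Fidx_succ m e k
  have hEF : Eidx m e (k+1) = Fidx m e (k+1) + e (k+1) := Eidx_succ m e k
  have hml : k + 1 ≤ m (k+1) := le_of_strictMonoOn hm (hm1 1 le_rfl) (k+1) (by omega)
  have hm3 : 3 ≤ m (k+1) := by omega
  have hmF : m (k+1) ≤ Fidx m e (k+1) := m_le_Fidx m e (k+1) (by omega)
  set E' := Eidx m e k with hE'
  set F := Fidx m e (k+1) with hF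
  set K := N - F with hKdef
  have hK1 : 1 ≤ K := by omega
  have hNFK : N = F + K := by omega
  have hKe : K ≤ e (k+1) := by omega
  have hN2 : 4 ≤ N := by omega
  have hblock := ha (k+1) (by omega)
  simp only [Nat.add_sub_cancel] at hblock
  obtain ⟨hlin, hquad⟩ := hblock
  set y := (fun n => Int.fract ((a n : ℝ) * α)) with hy
  set z₁ := (fun n : ℕ => Int.fract ((n : ℝ) * α)) with hz₁
  set z₂ := (fun n : ℕ => Int.fract ((n : ℝ) ^ 2 * α)) with hz₂
  set β₁ := Int.fract ((Bval m e k : ℝ) * α) with hβ₁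
  set β₂ := Int.fract ((Aval m e (k+1) : ℝ) * α) with hβ₂
  set R := (E' : ℝ) + 2 * (m (k+1)) * disc (m (k+1)) z₁ + 2 * K * disc K z₂ with hR
  -- the count bound
  have hxz1 : ∀ j, 1 ≤ j → j ≤ m (k+1) → y (E' + j) = Int.fract (β₁ + z₁ j) := by
    intro j hj1 hj2
    have han := hlin (E' + j) (by omega) (by omega)
    rw [show E' + j - E' = j from by omega] at han
    rw [hy, hβ₁, hz₁]
    simp only
    rw [fract_add_fract, han]
    congr 1
    push_cast
    ring
  have hxz2 : ∀ j, 1 ≤ j → j ≤ K → y (F + j) = Int.fract (β₂ + z₂ j) := by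
    intro j hj1 hj2
    have han := hquad (F + j) (by omega) (by omega)
    rw [show F + j - F = j from by omega] at han
    rw [hy, hβ₂, hz₂]
    simp only
    rw [fract_add_fract, han]
    congr 1
    push_cast
    ring
  have hcount : ∀ u v : ℝ, 0 ≤ u → u < v → v ≤ 1 →
      |(((Finset.Icc 1 N).filter (fun n => y n ∈ Set.Ico u v)).card : ℝ) - N * (v - u)| ≤ R := by
    intro u v hu huv hv
    have hsplit := card_filter_Icc_split (fun n => y n ∈ Set.Ico u v)
      (show E' ≤ F by omega) (show F ≤ N by omega)
    have hmid : Finset.Icc (E'+1) F = Finset.Icc (E'+1) (E' + m (k+1)) := by rw [hFE]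
    have hlast : Finset.Icc (F+1) N = Finset.Icc (F+1) (F + K) := by rw [hNFK]
    rw [hmid, hlast] at hsplit
    have hbA := prefix_bound y E' hu huv.le hv
    have hbB := block_count_bound y z₁ β₁ (m (k+1)) E'
      (fun j => Set.mem_Ico.mpr ⟨Int.fract_nonneg _, Int.fract_lt_one _⟩)
      (Set.mem_Ico.mpr ⟨Int.fract_nonneg _, Int.fract_lt_one _⟩)
      hxz1 (by omega) hu huv hv
    have hbC := block_count_bound y z₂ β₂ K F
      (fun j => Set.mem_Ico.mpr ⟨Int.fract_nonneg _, Int.fract_lt_one _⟩)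
      (Set.mem_Ico.mpr ⟨Int.fract_nonneg _, Int.fract_lt_one _⟩)
      hxz2 hK1 hu huv hv
    have hNsum : (N:ℝ) = (E':ℝ) + (m (k+1):ℝ) + (K:ℝ) := by
      norm_cast
      omega
    rw [hsplit]
    push_cast
    calc |(((Finset.Icc 1 E').filter (fun n => y n ∈ Set.Ico u v)).card : ℝ)
          + (((Finset.Icc (E'+1) (E' + m (k+1))).filter (fun n => y n ∈ Set.Ico u v)).card : ℝ)
          + (((Finset.Icc (F+1) (F + K)).filter (fun n => y n ∈ Set.Ico u v)).card : ℝ)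
          - N * (v - u)|
        = |((((Finset.Icc 1 E').filter (fun n => y n ∈ Set.Ico u v)).card : ℝ) - E' * (v - u))
          + ((((Finset.Icc (E'+1) (E' + m (k+1))).filter (fun n => y n ∈ Set.Ico u v)).card : ℝ)
              - (m (k+1)) * (v - u))
          + ((((Finset.Icc (F+1) (F + K)).filter (fun n => y n ∈ Set.Ico u v)).card : ℝ)
              - K * (v - u))| := by rw [hNsum]; ring_nf
      _ ≤ |(((Finset.Icc 1 E').filter (fun n => y n ∈ Set.Ico u v)).card : ℝ) - E' * (v - u)|
          + |(((Finset.Icc (E'+1) (E' + m (k+1))).filter (fun n => y n ∈ Set.Ico u v)).card : ℝ)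
              - (m (k+1)) * (v - u)|
          + |(((Finset.Icc (F+1) (F + K)).filter (fun n => y n ∈ Set.Ico u v)).card : ℝ)
              - K * (v - u)| := by
            exact (abs_add_le _ _).trans (add_le_add_left (abs_add_le _ _) _)
      _ ≤ R := by rw [hR]; exact add_le_add (add_le_add hbA hbB) hbC
  have hNpos : (0:ℝ) < N := by
    have : 0 < N := by omega
    exact_mod_cast this
  have hdisc : (N : ℝ) * disc N y ≤ R := by
    rw [mul_comm, ← le_div_iff₀ hNpos]
    rw [disc]
    apply ciSup_le
    rintro ⟨⟨u, v⟩, hu, huv, hv⟩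
    simp only
    have hcnt := hcount u v hu huv hv
    have key : |(((Finset.Icc 1 N).filter (fun n => y n ∈ Set.Ico u v)).card : ℝ) / N - (v - u)|
        = |(((Finset.Icc 1 N).filter (fun n => y n ∈ Set.Ico u v)).card : ℝ) - N * (v - u)| / N := by
      rw [eq_div_iff hNpos.ne', ← abs_of_pos hNpos, ← abs_mul]
      congr 1
      field_simp
      rw [abs_of_pos hNpos]; ring
    rw [key]
    exact (div_le_div_iff_of_pos_right hNpos).mpr hcnt
  -- now the numeric estimates
  have hNγ0 : (0:ℝ) ≤ (N:ℝ) ^ γ := Real.rpow_nonneg hNpos.le γ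
  have hM1 : (1:ℝ) ≤ max 1 c₂ := le_max_left _ _
  have h2γ : (2:ℝ) ≤ (2:ℝ) ^ (1 + γ) := by
    calc (2:ℝ) = 2 ^ (1:ℝ) := (Real.rpow_one 2).symm
      _ ≤ 2 ^ (1 + γ) := Real.rpow_le_rpow_of_exponent_le one_le_two (by linarith)
  -- prefix estimate
  have hNx₀ : x₀ ≤ (N:ℝ) := by
    have h1 : ⌈x₀⌉₊ ≤ N := by omega
    calc x₀ ≤ (⌈x₀⌉₊ : ℝ) := Nat.le_ceil x₀
      _ ≤ (N:ℝ) := by exact_mod_cast h1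
  have hNx₄ : x₄ ≤ (N:ℝ) := by
    have h1 : ⌈x₄⌉₊ ≤ N := by omega
    calc x₄ ≤ (⌈x₄⌉₊ : ℝ) := Nat.le_ceil x₄
      _ ≤ (N:ℝ) := by exact_mod_cast h1
  have hP2 := hx₀ (N:ℝ) hNx₀
  have h4N := hx₄ (N:ℝ) hNx₄
  have hmpos : (0:ℝ) < (m (k+1) : ℝ) := by
    have : 0 < m (k+1) := by omega
    exact_mod_cast this
  have hlogm1 : 1 ≤ Real.log (m (k+1)) := by
    have h3 : (3:ℝ) ≤ (m (k+1):ℝ) := by exact_mod_cast hm3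
    have hexp : Real.exp 1 ≤ 3 := by
      have := Real.exp_one_lt_d9
      linarith
    exact (Real.le_log_iff_exp_le hmpos).mpr (le_trans hexp h3)
  have hlogmN : Real.log (m (k+1)) ≤ Real.log N := by
    apply Real.log_le_log hmpos
    have : m (k+1) ≤ N := by omega
    exact_mod_cast this
  have hlogN0 : (0:ℝ) ≤ Real.log N := by linarith
  have sq_eq : ∀ x : ℝ, x ^ (2:ℝ) = x ^ 2 := fun x => by
    rw [show (2:ℝ) = ((2:ℕ):ℝ) by norm_num, Real.rpow_natCast]
  have hr32 : (Real.log (m (k+1))) ^ (3/2:ℝ) ≤ (Real.log (m (k+1))) ^ (2:ℝ) :=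
    Real.rpow_le_rpow_of_exponent_le hlogm1 (by norm_num)
  have hr2 : (Real.log (m (k+1))) ^ (2:ℝ) ≤ (Real.log N) ^ (2:ℝ) :=
    Real.rpow_le_rpow (by linarith) hlogmN (by norm_num)
  have hcondi' : (E' : ℝ) ≤ (Real.log (m (k+1))) ^ (2:ℝ) := by
    have h := hcondi (k+1) (by omega)
    simp only [Nat.add_sub_cancel] at h
    rw [sq_eq]
    exact h
  have hlinbound : 2 * (m (k+1) : ℝ) * disc (m (k+1)) z₁ ≤ 2 * c₁ * (Real.log N) ^ (2:ℝ) := by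
    have h := hα1 (m (k+1)) (by omega)
    have hch : c₁ * Real.log (m (k+1)) ^ (3/2:ℝ) ≤ c₁ * (Real.log N) ^ (2:ℝ) :=
      mul_le_mul_of_nonneg_left (hr32.trans hr2) hc₁
    calc 2 * (m (k+1) : ℝ) * disc (m (k+1)) z₁
        = 2 * ((m (k+1) : ℝ) * disc (m (k+1)) z₁) := by ring
      _ ≤ 2 * (c₁ * Real.log (m (k+1)) ^ (3/2:ℝ)) := by linarith
      _ ≤ 2 * (c₁ * (Real.log N) ^ (2:ℝ)) := by linarith
      _ = 2 * c₁ * (Real.log N) ^ (2:ℝ) := by ring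
  have hPfinal : (E' : ℝ) + 2 * (m (k+1) : ℝ) * disc (m (k+1)) z₁ ≤ (N:ℝ)^γ - 2 := by
    have : (E' : ℝ) + 2 * (m (k+1) : ℝ) * disc (m (k+1)) z₁
        ≤ (1 + 2*c₁) * (Real.log N) ^ (2:ℝ) := by
      have := hcondi'.trans hr2
      linarith
    linarith
  -- quadratic estimate
  have hKpos : (0:ℝ) < (K:ℝ) := by
    have : 0 < K := hK1
    exact_mod_cast this
  have hQ : 2 * (K:ℝ) * disc K z₂ ≤ max 1 c₂ * (N:ℝ)^γ := by
    rcases eq_or_lt_of_le hK1 with hKone | hK2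
    · -- K = 1
      have hd1 : disc K z₂ ≤ 1 := disc_le_one K z₂
      have hd0 : 0 ≤ disc K z₂ := disc_nonneg K z₂
      have hKone' : (K:ℝ) = 1 := by exact_mod_cast hKone.symm
      rw [hKone']
      have h2N : (2:ℝ) ≤ (N:ℝ)^γ := by linarith
      calc 2 * (1:ℝ) * disc K z₂ ≤ 2 := by nlinarith
        _ ≤ (N:ℝ)^γ := h2N
        _ ≤ max 1 c₂ * (N:ℝ)^γ := le_mul_of_one_le_left hNγ0 hM1
    · -- 2 ≤ K
      have hK2' : 2 ≤ K := hK2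
      have hq := hα2 K (by omega)
      have hFpos : (0:ℝ) < (F:ℝ) := by
        have : 0 < F := by omega
        exact_mod_cast this
      set X := (F:ℝ) ^ (2*γ) with hX
      set Lr := Real.log X with hLrdef
      have hXpos : 0 < X := Real.rpow_pos_of_pos hFpos _
      have hLreq : Lr = (2*γ) * Real.log F := by rw [hLrdef, hX, Real.log_rpow hFpos]
      have hLr65536 : (65536:ℝ) ≤ Lr := by
        have hlF : 65536/(2*γ) ≤ Real.log F := by
          have h1 : (⌈Real.exp (65536/(2*γ))⌉₊ : ℕ) ≤ F := by omega
          have h2 : Real.exp (65536/(2*γ)) ≤ (F:ℝ) := by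
            calc Real.exp (65536/(2*γ)) ≤ (⌈Real.exp (65536/(2*γ))⌉₊ : ℝ) := Nat.le_ceil _
              _ ≤ (F:ℝ) := by exact_mod_cast h1
          exact (Real.le_log_iff_exp_le hFpos).mpr h2
        have h3 : (2*γ) * (65536/(2*γ)) ≤ (2*γ) * Real.log F :=
          mul_le_mul_of_nonneg_left hlF (by linarith)
        rw [hLreq]
        calc (65536:ℝ) = (2*γ) * (65536/(2*γ)) := by field_simp
          _ ≤ (2*γ) * Real.log F := h3
      have hLrpos : (0:ℝ) < Lr := by linarith
      have hXexp : X = Real.exp Lr := (Real.exp_log hXpos).symm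
      have hXge : Lr + 1 ≤ X := by rw [hXexp]; linarith [Real.add_one_le_exp Lr]
      have hXLr1 : 1 ≤ X / Lr := by rw [le_div_iff₀ hLrpos]; linarith
      have hKX : (K:ℝ) ≤ 2*X/Lr := by
        have hEe := hcondii (k+1) (by omega)
        have hKe' : (K:ℝ) ≤ (e (k+1) : ℝ) := by exact_mod_cast hKe
        rw [hEe] at hKe'
        have hceil : ((⌈X/Lr⌉₊:ℕ) : ℝ) < X/Lr + 1 := Nat.ceil_lt_add_one (by positivity)
        have : X/Lr + 1 ≤ 2*X/Lr := by
          have : 2*X/Lr = X/Lr + X/Lr := by ring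
          linarith
        calc (K:ℝ) ≤ ((⌈X/Lr⌉₊:ℕ) : ℝ) := hKe'
          _ ≤ X/Lr + 1 := le_of_lt hceil
          _ ≤ 2*X/Lr := this
      have hlogK0 : 0 ≤ Real.log K := Real.log_nonneg (by exact_mod_cast hK1)
      have hlogK : Real.log K ≤ 2*Lr := by
        have h1 : Real.log K ≤ Real.log (2*X/Lr) := Real.log_le_log hKpos hKX
        have h2 : 2*X/Lr ≤ 2*X := by
          rw [div_le_iff₀ hLrpos]
          nlinarith
        have h3 : Real.log (2*X/Lr) ≤ Real.log (2*X) :=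
          Real.log_le_log (by positivity) h2
        have h4 : Real.log (2*X) = Real.log 2 + Real.log X :=
          Real.log_mul (by norm_num) hXpos.ne'
        have h5 : Real.log 2 ≤ 1 := by
          have := Real.log_two_lt_d9
          linarith
        rw [h4] at h3
        rw [← hLrdef] at h3
        linarith
      have h1 : (K:ℝ)^(1/2:ℝ) ≤ (2*X/Lr)^(1/2:ℝ) :=
        Real.rpow_le_rpow hKpos.le hKX (by norm_num)
      have h2 : (Real.log K)^(3/8:ℝ) ≤ (2*Lr)^(3/8:ℝ) :=
        Real.rpow_le_rpow hlogK0 hlogK (by norm_num)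
      have hq1 : (2*X/Lr)^(1/2:ℝ) = X^(1/2:ℝ) * ((2/Lr)^(1/2:ℝ)) := by
        rw [← Real.mul_rpow hXpos.le (by positivity)]
        congr 1
        field_simp
      have hq2 : (2/Lr)^(1/2:ℝ) * (2*Lr)^(3/8:ℝ) ≤ 1/2 := by
        have e1 : (2/Lr)^(1/2:ℝ) = (2:ℝ)^(1/2:ℝ) / Lr^(1/2:ℝ) :=
          Real.div_rpow (by norm_num) hLrpos.le _
        have e2 : (2*Lr)^(3/8:ℝ) = (2:ℝ)^(3/8:ℝ) * Lr^(3/8:ℝ) :=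
          Real.mul_rpow (by norm_num) hLrpos.le
        have e3 : Lr^(3/8:ℝ) / Lr^(1/2:ℝ) = Lr^(-(1/8):ℝ) := by
          rw [← Real.rpow_sub hLrpos]
          norm_num
        have e4 : (2:ℝ)^(1/2:ℝ) * (2:ℝ)^(3/8:ℝ) = (2:ℝ)^(7/8:ℝ) := by
          rw [← Real.rpow_add two_pos]
          norm_num
        have e5 : (2:ℝ)^(7/8:ℝ) ≤ 2 := by
          calc (2:ℝ)^(7/8:ℝ) ≤ 2^(1:ℝ) :=
                Real.rpow_le_rpow_of_exponent_le one_le_two (by norm_num)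
            _ = 2 := Real.rpow_one 2
        have e6 : Lr^(-(1/8):ℝ) ≤ 1/4 := by
          rw [Real.rpow_neg hLrpos.le]
          have h65 : (4:ℝ) ≤ Lr^(1/8:ℝ) := by
            have h4' : ((65536:ℝ))^(1/8:ℝ) ≤ Lr^(1/8:ℝ) :=
              Real.rpow_le_rpow (by norm_num) hLr65536 (by norm_num)
            have h4e : ((65536:ℝ))^(1/8:ℝ) = 4 := by
              rw [show (65536:ℝ) = (4:ℝ)^(8:ℕ) by norm_num, ← Real.rpow_natCast 4 8,
                ← Real.rpow_mul (by norm_num : (0:ℝ) ≤ 4)]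
              norm_num
            linarith
          have hpos8 : (0:ℝ) < Lr^(1/8:ℝ) := Real.rpow_pos_of_pos hLrpos _
          rw [show (1:ℝ)/4 = (4:ℝ)⁻¹ by norm_num]
          exact inv_anti₀ (by norm_num) h65
        calc (2/Lr)^(1/2:ℝ) * (2*Lr)^(3/8:ℝ)
            = ((2:ℝ)^(1/2:ℝ) * (2:ℝ)^(3/8:ℝ)) * (Lr^(3/8:ℝ) / Lr^(1/2:ℝ)) := by
              rw [e1, e2]; ring
          _ = (2:ℝ)^(7/8:ℝ) * Lr^(-(1/8):ℝ) := by rw [e3, e4]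
          _ ≤ 2 * (1/4) := by
              apply mul_le_mul e5 e6 (Real.rpow_nonneg hLrpos.le _) (by norm_num)
          _ = 1/2 := by norm_num
      have hX12 : X^(1/2:ℝ) = (F:ℝ)^γ := by
        rw [hX, ← Real.rpow_mul hFpos.le]
        congr 1
        ring
      have hFNγ : (F:ℝ)^γ ≤ (N:ℝ)^γ := by
        apply Real.rpow_le_rpow hFpos.le _ hγ0.le
        have : F ≤ N := by omega
        exact_mod_cast this
      have hX120 : (0:ℝ) ≤ X^(1/2:ℝ) := Real.rpow_nonneg hXpos.le _
      calc 2 * (K:ℝ) * disc K z₂ = 2 * ((K:ℝ) * disc K z₂) := by ring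
        _ ≤ 2 * (c₂ * (K:ℝ)^(1/2:ℝ) * (Real.log K)^(3/8:ℝ)) := by linarith
        _ ≤ 2 * (c₂ * ((2*X/Lr)^(1/2:ℝ) * (2*Lr)^(3/8:ℝ))) := by
            have hmm : c₂ * (K:ℝ)^(1/2:ℝ) * (Real.log K)^(3/8:ℝ)
                ≤ c₂ * ((2*X/Lr)^(1/2:ℝ) * (2*Lr)^(3/8:ℝ)) := by
              rw [mul_assoc]
              apply mul_le_mul_of_nonneg_left _ hc₂
              exact mul_le_mul h1 h2 (Real.rpow_nonneg hlogK0 _)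
                (Real.rpow_nonneg (by positivity) _)
            linarith
        _ = 2 * c₂ * (X^(1/2:ℝ) * ((2/Lr)^(1/2:ℝ) * (2*Lr)^(3/8:ℝ))) := by
            rw [hq1]; ring
        _ ≤ 2 * c₂ * (X^(1/2:ℝ) * (1/2)) := by
            apply mul_le_mul_of_nonneg_left _ (by linarith : (0:ℝ) ≤ 2*c₂)
            exact mul_le_mul_of_nonneg_left hq2 hX120
        _ = c₂ * X^(1/2:ℝ) := by ring
        _ = c₂ * (F:ℝ)^γ := by rw [hX12]
        _ ≤ max 1 c₂ * (N:ℝ)^γ :=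
            mul_le_mul (le_max_right 1 c₂) hFNγ (by positivity) (le_trans hc₂ (le_max_right _ _))
  -- final combination
  have heq : max 1 c₂ * 2^(1+γ) * (N:ℝ)^γ = 2^(1+γ) * (max 1 c₂ * (N:ℝ)^γ) := by ring
  have hNγM : (N:ℝ)^γ ≤ max 1 c₂ * (N:ℝ)^γ := le_mul_of_one_le_left hNγ0 hM1
  have hMN0 : (0:ℝ) ≤ max 1 c₂ * (N:ℝ)^γ := by positivity
  have h2M : 2 * (max 1 c₂ * (N:ℝ)^γ) ≤ 2^(1+γ) * (max 1 c₂ * (N:ℝ)^γ) :=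
    mul_le_mul_of_nonneg_right h2γ hMN0
  calc (N : ℝ) * disc N y ≤ R := hdisc
    _ = ((E' : ℝ) + 2 * (m (k+1)) * disc (m (k+1)) z₁) + 2 * K * disc K z₂ := by rw [hR]
    _ ≤ ((N:ℝ)^γ - 2) + max 1 c₂ * (N:ℝ)^γ := add_le_add hPfinal hQ
    _ ≤ max 1 c₂ * 2^(1+γ) * (N:ℝ)^γ := by
        rw [heq]
        linarith
end
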